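/- Let μ be a vertex of Γ with v_Γ(μ) = 1. Then every ξ ∈ H_μ satisfies d̂_μ·ξ ≥ 1. In particular, if d̂_μ = 0 then H_μ is empty. -/

import Mathlib

open Matrix BigOperators

open scoped Classical

noncomputable section

/-- Proximity data of a dual graph on vertex set `Fin N`, built from a single
root vertex by a finite sequence of elementary modifications. Vertices are
ordered by creation; each new vertex is proximate to at most two existing
(earlier) vertices, which must be adjacent to each other at that time if
there are two of them. -/
structure DualGraph where
  N : ℕ
  Npos : 0 < N
  prox : Fin N → Fin N → Prop
  prox_lt : ∀ {μ ν}, prox μ ν → ν < μ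
  prox_card : ∀ μ, {ν | prox μ ν}.ncard ≤ 2
  prox_nonempty : ∀ μ : Fin N, 0 < (μ : ℕ) → ∃ ν, prox μ ν
  prox_pair : ∀ {μ a b}, prox μ a → prox μ b → a ≠ b →
      (prox a b ∨ prox b a) ∧ ∀ ρ, ρ < μ → ¬(prox ρ a ∧ prox ρ b)

namespace DualGraph

variable (G : DualGraph)

/-- The proximity matrix `P`. -/
def P : Matrix (Fin G.N) (Fin G.N) ℚ :=
  fun μ ν => if μ = ν then 1 else if G.prox μ ν then -1 else 0

/-- `Q = P⁻¹`. -/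
def Q : Matrix (Fin G.N) (Fin G.N) ℚ := (G.P)⁻¹

/-- The valuation matrix `V = (PᵀP)⁻¹`. -/
def V : Matrix (Fin G.N) (Fin G.N) ℚ := (G.Pᵀ * G.P)⁻¹

/-- Adjacency in the dual graph: `μ ∼ ν` iff `(PᵀP)_{μν} = -1`. -/
def adj (μ ν : Fin G.N) : Prop := μ ≠ ν ∧ (G.Pᵀ * G.P) μ ν = -1

lemma adj_symm {μ ν : Fin G.N} (h : G.adj μ ν) : G.adj ν μ := by
  obtain ⟨hne, h2⟩ := h
  refine ⟨hne.symm, ?_⟩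
  have ht : (G.Pᵀ * G.P)ᵀ = G.Pᵀ * G.P := by
    rw [Matrix.transpose_mul, Matrix.transpose_transpose]
  calc (G.Pᵀ * G.P) ν μ = (G.Pᵀ * G.P)ᵀ μ ν := rfl
    _ = (G.Pᵀ * G.P) μ ν := by rw [ht]
    _ = -1 := h2

/-- The dual graph as a simple graph. -/
def graph : SimpleGraph (Fin G.N) where
  Adj := G.adj
  symm := ⟨fun _ _ h => G.adj_symm h⟩
  loopless := ⟨fun μ h => h.1 rfl⟩

/-- The graph distance `d(μ,ν)`. -/
def dist (μ ν : Fin G.N) : ℕ := G.graph.dist μ ν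

/-- The set of vertices on the unique path `[μ,γ]` from `μ` to `γ`. -/
def pathSet (μ γ : Fin G.N) : Finset (Fin G.N) :=
  Finset.univ.filter (fun ν => G.dist μ ν + G.dist ν γ = G.dist μ γ)

/-- The branch `Γ^μ_ν` emanating from `μ` towards `ν`: the maximal connected
subgraph of `Γ` containing `ν` but not `μ` (with `Γ^μ_μ = ∅`). -/
def branch (μ ν : Fin G.N) : Finset (Fin G.N) :=
  Finset.univ.filter (fun η => ν ≠ μ ∧ η ≠ μ ∧ μ ∉ G.pathSet ν η)

/-- The set of vertices adjacent to `μ`. -/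
def nbrs (μ : Fin G.N) : Finset (Fin G.N) := Finset.univ.filter (fun ν => G.adj μ ν)

/-- The valence `v_Γ(μ)`: the number of vertices adjacent to `μ`. -/
def valence (μ : Fin G.N) : ℕ := (G.nbrs μ).card

/-- The weight `w_Γ(μ) = (PᵀP)_{μμ}`. -/
def w (μ : Fin G.N) : ℚ := (G.Pᵀ * G.P) μ μ

/-- The canonical vector `k`, `k_ν = Σ_μ q_{νμ}`. -/
def kvec : Fin G.N → ℚ := fun ν => ∑ μ, G.Q ν μ

/-- A divisor with valuation vector `f` is antinef iff its factorization
vector `f̂ = f PᵀP` is nonnegative. -/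
def Antinef (f : Fin G.N → ℚ) : Prop := ∀ ν, 0 ≤ (f ᵥ* (G.Pᵀ * G.P)) ν

/-- `λ(fE, gE; ν) = (f_ν + k_ν + 1)/g_ν` for divisors with valuation
vectors `f`, `g`. -/
def lamDiv (f g : Fin G.N → ℚ) (ν : Fin G.N) : ℚ := (f ν + G.kvec ν + 1) / g ν

/-- `ρ_{[μ,γ]}(ν) = V_{γν}/V_{μν}`. -/
def rho (μ γ ν : Fin G.N) : ℚ := G.V γ ν / G.V μ ν

/-- `r̂_{[μ,γ]} = 𝟙_γ − ρ_{[μ,γ]}(μ)·𝟙_μ`. -/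
def rhat (μ γ : Fin G.N) : Fin G.N → ℚ :=
  fun j => (if j = γ then 1 else 0) - G.rho μ γ μ * (if j = μ then 1 else 0)

/-- `φ_η^{[μ,γ]}(ν) = (r̂_{[μ,γ]}V)_ν / V_{ην}`. -/
def phi (η μ γ ν : Fin G.N) : ℚ := (G.rhat μ γ ᵥ* G.V) ν / G.V η ν

/-- The transform `f̂_{⟨ĝ⟩[ĥ]}` relative to the vertex `μ`. -/
def transform (μ : Fin G.N) (fh gh hh : Fin G.N → ℚ) : Fin G.N → ℚ :=
  fh - (∑ i ∈ G.nbrs μ, ∑ j ∈ G.branch μ i, gh j • G.rhat i j)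
     + ∑ i ∈ G.nbrs μ, hh i • G.rhat μ i

/-- The transform `f̂^𝒩 = f̂ − Σ_i f̂_i·r̂_{[μ,i]}` relative to the vertex `μ`. -/
def nmap (μ : Fin G.N) (fh : Fin G.N → ℚ) : Fin G.N → ℚ :=
  fh - ∑ i, fh i • G.rhat μ i

/-- A vertex is free if it is proximate to at most one vertex. -/
def Free (μ : Fin G.N) : Prop := {ν | G.prox μ ν}.ncard ≤ 1

/-- `μ` is infinitely near to `ν` (written `ν ⊂ μ`): the reflexive-transitive
closure of proximity. -/
def InfNear (μ ν : Fin G.N) : Prop := Relation.ReflTransGen G.prox μ ν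

/-- The root vertex. -/
def root : Fin G.N := ⟨0, G.Npos⟩

/-- The branch `Γ^μ_ν` is anterior to `μ` if `μ` is infinitely near to some of
its vertices; otherwise it is posterior. -/
def Anterior (μ ν : Fin G.N) : Prop := ∃ η ∈ G.branch μ ν, G.InfNear μ η

/-- The pair `(γ,τ)` associated to `μ`. -/
def PairAssociated (γ τ μ : Fin G.N) : Prop :=
  G.InfNear τ γ ∧ G.InfNear μ τ ∧ G.Free τ ∧
  (∀ ν, G.Free ν → G.InfNear μ ν → G.InfNear τ ν) ∧
  ((¬ G.Free γ ∧ ∀ ν, ¬ G.Free ν → G.InfNear τ ν → G.InfNear γ ν) ∨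
   ((∀ ν, G.InfNear τ ν → G.Free ν) ∧ γ = G.root))

/-- The entries of `V` as natural numbers (they are positive integers). -/
def Vnat (μ ν : Fin G.N) : ℕ := (G.V μ ν).num.toNat

/-- The submonoid `SV^μ_ν` of `ℕ` generated by `{V_{μi} : i ∈ Γ^μ_ν ∪ {μ}}`. -/
def SVb (μ ν : Fin G.N) : AddSubmonoid ℕ :=
  AddSubmonoid.closure ↑((insert μ (G.branch μ ν)).image (G.Vnat μ))

/-- `s^μ_ν = gcd{V_{μi} : i ∈ Γ^μ_ν ∪ {μ}}`. -/
def sgcd (μ ν : Fin G.N) : ℕ := (insert μ (G.branch μ ν)).gcd (G.Vnat μ)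

/-- The submonoid `S^μ` of `ℕ` generated by the `s^μ_ν`, `ν ∈ Γ`. -/
def Ssg (μ : Fin G.N) : AddSubmonoid ℕ :=
  AddSubmonoid.closure (Set.range (fun ν => G.sgcd μ ν))

/-- The valuation vector `d = d̂V` of the ideal with factorization vector `d̂`. -/
def dval (dh : Fin G.N → ℕ) : Fin G.N → ℚ := (fun i => (dh i : ℚ)) ᵥ* G.V

/-- `λ(a,ν) = (a + k_ν + 1)/d_ν`. -/
def lamA (dh : Fin G.N → ℕ) (a : ℚ) (ν : Fin G.N) : ℚ :=
  (a + G.kvec ν + 1) / G.dval dh ν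

/-- The set of jumping numbers of the ideal with factorization vector `d̂`
supported at the vertex `μ`. -/
def Hset (dh : Fin G.N → ℕ) (μ : Fin G.N) : Set ℚ :=
  { ξ | ∃ f : Fin G.N → ℤ, G.Antinef (fun i => (f i : ℚ)) ∧
      (∀ ν, G.lamA dh (f μ : ℚ) μ ≤ G.lamA dh (f ν : ℚ) ν) ∧
      ξ = G.lamA dh (f μ : ℚ) μ }

end DualGraph
end

namespace DualGraph

variable (G : DualGraph)

lemma prox_irrefl (μ : Fin G.N) : ¬ G.prox μ μ := fun h => lt_irrefl _ (G.prox_lt h)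

lemma P_lower : G.P.BlockTriangular OrderDual.toDual := by
  intro i j h
  rw [OrderDual.toDual_lt_toDual] at h
  unfold P
  rw [if_neg h.ne, if_neg (fun hp => absurd (G.prox_lt hp) (not_lt.2 h.le))]

lemma P_det : G.P.det = 1 := by
  rw [Matrix.det_of_lowerTriangular _ G.P_lower]
  simp [P]

lemma P_isUnit : IsUnit G.P.det := by rw [G.P_det]; exact isUnit_one

lemma P_mul_Q : G.P * G.Q = 1 := Matrix.mul_nonsing_inv _ G.P_isUnit

lemma Q_rec (μ ν : Fin G.N) :
    G.Q μ ν = (if μ = ν then 1 else 0)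
      + ∑ ρ ∈ Finset.univ.filter (fun ρ => G.prox μ ρ), G.Q ρ ν := by
  have h := congrFun (congrFun G.P_mul_Q μ) ν
  rw [Matrix.mul_apply, Matrix.one_apply] at h
  have hd : ∀ ρ, G.P μ ρ * G.Q ρ ν =
      (if μ = ρ then G.Q ρ ν else 0) - (if G.prox μ ρ then G.Q ρ ν else 0) := by
    intro ρ
    by_cases h1 : μ = ρ
    · subst h1; simp [P, G.prox_irrefl]
    · by_cases h2 : G.prox μ ρ <;> simp [P, h1, h2]
  rw [Finset.sum_congr rfl (fun ρ _ => hd ρ), Finset.sum_sub_distrib,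
    Finset.sum_ite_eq, if_pos (Finset.mem_univ μ), ← Finset.sum_filter] at h
  linarith

lemma Q_pos_aux : ∀ n : ℕ, ∀ μ : Fin G.N, (μ : ℕ) < n →
    ((∀ ν, 0 ≤ G.Q μ ν) ∧ 1 ≤ G.Q μ G.root) := by
  intro n
  induction n with
  | zero => exact fun μ h => absurd h (Nat.not_lt_zero _)
  | succ n ihn =>
    intro μ hμ
    have ih : ∀ ρ : Fin G.N, ρ < μ → ((∀ ν, 0 ≤ G.Q ρ ν) ∧ 1 ≤ G.Q ρ G.root) :=
      fun ρ hρ => ihn ρ (by omega)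
    have hnn : ∀ ν, 0 ≤ ∑ ρ ∈ Finset.univ.filter (fun ρ => G.prox μ ρ), G.Q ρ ν := by
      intro ν
      refine Finset.sum_nonneg fun ρ hρ => ?_
      exact (ih ρ (G.prox_lt (Finset.mem_filter.1 hρ).2)).1 ν
    constructor
    · intro ν
      rw [G.Q_rec]
      have : (0:ℚ) ≤ if μ = ν then 1 else 0 := by split <;> norm_num
      linarith [hnn ν]
    · rw [G.Q_rec]
      by_cases hμ : μ = G.root
      · rw [if_pos hμ]; linarith [hnn G.root]
      · rw [if_neg hμ]
        have h0 : 0 < (μ : ℕ) := by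
          rcases Nat.eq_zero_or_pos (μ : ℕ) with h | h
          · exact absurd (Fin.ext h : μ = G.root) hμ
          · exact h
        obtain ⟨ρ, hρ⟩ := G.prox_nonempty μ h0
        have hmem : ρ ∈ Finset.univ.filter (fun ρ => G.prox μ ρ) := by
          simp [hρ]
        have hsingle := Finset.single_le_sum
          (f := fun ρ => G.Q ρ G.root)
          (fun i hi => (ih i (G.prox_lt (Finset.mem_filter.1 hi).2)).1 G.root) hmem
        have h1 : 1 ≤ G.Q ρ G.root := (ih ρ (G.prox_lt hρ)).2
        linarith

lemma Q_pos (μ : Fin G.N) : (∀ ν, 0 ≤ G.Q μ ν) ∧ 1 ≤ G.Q μ G.root :=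
  G.Q_pos_aux ((μ : ℕ) + 1) μ (Nat.lt_succ_self _)

lemma PtP_isUnit : IsUnit (G.Pᵀ * G.P).det := by
  rw [Matrix.det_mul, Matrix.det_transpose, G.P_det]; simp

lemma V_mul : G.V * (G.Pᵀ * G.P) = 1 := Matrix.nonsing_inv_mul _ G.PtP_isUnit

lemma V_eq : G.V = G.Q * G.Qᵀ := by
  unfold V Q
  rw [Matrix.mul_inv_rev, Matrix.transpose_nonsing_inv]

lemma V_one_le (μ ν : Fin G.N) : 1 ≤ G.V μ ν := by
  rw [G.V_eq, Matrix.mul_apply]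
  have hnn : ∀ ρ ∈ Finset.univ, 0 ≤ G.Q μ ρ * G.Qᵀ ρ ν :=
    fun ρ _ => mul_nonneg ((G.Q_pos μ).1 ρ) ((G.Q_pos ν).1 ρ)
  have h1 : 1 ≤ G.Q μ G.root * G.Qᵀ G.root ν := by
    have := (G.Q_pos μ).2
    have := (G.Q_pos ν).2
    have : (1:ℚ) * 1 ≤ G.Q μ G.root * G.Q ν G.root := by
      apply mul_le_mul (G.Q_pos μ).2 (G.Q_pos ν).2 (by norm_num)
      linarith [(G.Q_pos μ).2]
    simpa [Matrix.transpose_apply] using this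
  calc (1:ℚ) ≤ G.Q μ G.root * G.Qᵀ G.root ν := h1
    _ ≤ ∑ ρ, G.Q μ ρ * G.Qᵀ ρ ν := Finset.single_le_sum hnn (Finset.mem_univ G.root)

lemma M_apply (μ ν : Fin G.N) : (G.Pᵀ * G.P) μ ν = ∑ ρ, G.P ρ μ * G.P ρ ν := by
  rw [Matrix.mul_apply]
  exact Finset.sum_congr rfl fun ρ _ => by rw [Matrix.transpose_apply]

lemma M_symm (μ ν : Fin G.N) : (G.Pᵀ * G.P) ν μ = (G.Pᵀ * G.P) μ ν := by
  rw [G.M_apply, G.M_apply]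
  exact Finset.sum_congr rfl fun ρ _ => mul_comm _ _

lemma prox_asymm {μ ν : Fin G.N} (h : G.prox μ ν) : ¬ G.prox ν μ :=
  fun h2 => absurd (G.prox_lt h2) (not_lt.2 (G.prox_lt h).le)

lemma M_offdiag {μ ν : Fin G.N} (h : μ ≠ ν) :
    (G.Pᵀ * G.P) μ ν = 0 ∨ (G.Pᵀ * G.P) μ ν = -1 := by
  rw [G.M_apply]
  set t : Fin G.N → ℚ := fun ρ => G.P ρ μ * G.P ρ ν with ht
  have hνmem : ν ∈ Finset.univ.erase μ := Finset.mem_erase.2 ⟨h.symm, Finset.mem_univ ν⟩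
  have hsplit : ∑ ρ, t ρ = t μ + (t ν + ∑ ρ ∈ (Finset.univ.erase μ).erase ν, t ρ) := by
    rw [Finset.add_sum_erase _ t hνmem, Finset.add_sum_erase _ t (Finset.mem_univ μ)]
  have hterm : ∀ ρ ∈ (Finset.univ.erase μ).erase ν,
      t ρ = if G.prox ρ μ ∧ G.prox ρ ν then (1:ℚ) else 0 := by
    intro ρ hρ
    have hρν : ρ ≠ ν := (Finset.mem_erase.1 hρ).1
    have hρμ : ρ ≠ μ := (Finset.mem_erase.1 (Finset.mem_erase.1 hρ).2).1
    simp only [ht, P, if_neg hρμ, if_neg hρν]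
    by_cases h1 : G.prox ρ μ <;> by_cases h2 : G.prox ρ ν <;> simp [h1, h2]
  have htμ : t μ = if G.prox μ ν then (-1:ℚ) else 0 := by
    simp only [ht, P, if_pos rfl, if_neg h, one_mul]
    by_cases h2 : G.prox μ ν <;> simp [h2]
  have htν : t ν = if G.prox ν μ then (-1:ℚ) else 0 := by
    simp only [ht, P, if_pos rfl, if_neg h.symm, mul_one]
    by_cases h2 : G.prox ν μ <;> simp [h2]
  rw [hsplit, Finset.sum_congr rfl hterm]
  by_cases hc : ∃ ρ, G.prox ρ μ ∧ G.prox ρ ν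
  · obtain ⟨ρ₀, hρ₀⟩ := hc
    obtain ⟨hor, huniq⟩ := G.prox_pair hρ₀.1 hρ₀.2 h
    have hset : ((Finset.univ.erase μ).erase ν).filter
        (fun ρ => G.prox ρ μ ∧ G.prox ρ ν) = {ρ₀} := by
      apply Finset.eq_singleton_iff_unique_mem.2
      constructor
      · refine Finset.mem_filter.2 ⟨?_, hρ₀⟩
        refine Finset.mem_erase.2 ⟨fun he => ?_, Finset.mem_erase.2 ⟨fun he => ?_, Finset.mem_univ _⟩⟩
        · exact absurd (he ▸ hρ₀.2) (G.prox_irrefl ν)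
        · exact absurd (he ▸ hρ₀.1) (G.prox_irrefl μ)
      · intro σ hσ
        obtain ⟨-, hσ2⟩ := Finset.mem_filter.1 hσ
        by_contra hne
        rcases lt_or_gt_of_ne hne with hlt | hlt
        · exact huniq σ hlt ⟨hσ2.1, hσ2.2⟩
        · exact (G.prox_pair hσ2.1 hσ2.2 h).2 ρ₀ hlt ⟨hρ₀.1, hρ₀.2⟩
    rw [Finset.sum_ite, Finset.sum_const_zero, hset]
    left
    rcases hor with h1 | h1
    · rw [htμ, if_pos h1, htν, if_neg (G.prox_asymm h1)]
      simp
    · rw [htν, if_pos h1, htμ, if_neg (G.prox_asymm h1)]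
      simp
  · push_neg at hc
    have hzero : ∀ ρ ∈ (Finset.univ.erase μ).erase ν,
        (if G.prox ρ μ ∧ G.prox ρ ν then (1:ℚ) else 0) = 0 := by
      intro ρ _
      rw [if_neg (fun hh => hc ρ hh.1 hh.2)]
    rw [Finset.sum_congr rfl hzero, Finset.sum_const_zero, add_zero]
    rw [htμ, htν]
    by_cases h1 : G.prox μ ν
    · rw [if_pos h1, if_neg (G.prox_asymm h1)]
      right; ring
    · rw [if_neg h1]
      by_cases h2 : G.prox ν μ
      · rw [if_pos h2]; right; ring
      · rw [if_neg h2]; left; ring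

lemma P_colsum (μ : Fin G.N) : ∑ ρ, G.P ρ μ = 2 - (G.Pᵀ * G.P) μ μ := by
  rw [G.M_apply]
  have hterm : ∀ ρ ∈ Finset.univ,
      G.P ρ μ = (if ρ = μ then (2:ℚ) else 0) - G.P ρ μ * G.P ρ μ := by
    intro ρ _
    by_cases h : ρ = μ
    · subst h; norm_num [P]
    · simp only [P, if_neg h]
      by_cases h2 : G.prox ρ μ <;> simp [h2]
  rw [Finset.sum_congr rfl hterm, Finset.sum_sub_distrib, Finset.sum_ite_eq',
    if_pos (Finset.mem_univ μ)]

lemma kvec_eq : G.kvec = G.Q *ᵥ (fun _ => 1) := by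
  funext ν
  simp [kvec, Matrix.mulVec, dotProduct]

lemma M_mulVec_k : (G.Pᵀ * G.P) *ᵥ G.kvec = G.Pᵀ *ᵥ (fun _ => 1) := by
  rw [G.kvec_eq, Matrix.mulVec_mulVec, Matrix.mul_assoc, G.P_mul_Q, Matrix.mul_one]

end DualGraph

/-- If `v_Γ(μ) = 1` then every `ξ ∈ H_μ` satisfies `d̂_μ·ξ ≥ 1`; in particular
`H_μ = ∅` when `d̂_μ = 0`. -/
theorem stmt17 (G : DualGraph) (μ : Fin G.N) (dh : Fin G.N → ℕ) (hdh : dh ≠ 0)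
    (hval : G.valence μ = 1) :
    (∀ ξ ∈ G.Hset dh μ, 1 ≤ (dh μ : ℚ) * ξ) ∧
    (dh μ = 0 → G.Hset dh μ = ∅) := by
  have main : ∀ ξ ∈ G.Hset dh μ, 1 ≤ (dh μ : ℚ) * ξ := by
    intro ξ hξ
    obtain ⟨f, hanti, hmin, hξeq⟩ := hξ
    obtain ⟨η, hη⟩ := Finset.card_eq_one.1 hval
    have hηadj : G.adj μ η := by
      have : η ∈ G.nbrs μ := hη ▸ Finset.mem_singleton_self η
      exact (Finset.mem_filter.1 this).2
    have hμη : μ ≠ η := hηadj.1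
    set w : ℚ := (G.Pᵀ * G.P) μ μ with hw
    have hMrow : ∀ ν, (G.Pᵀ * G.P) μ ν
        = (if ν = μ then w else 0) + (if ν = η then -1 else 0) := by
      intro ν
      by_cases h1 : ν = μ
      · subst h1
        rw [if_pos rfl, if_neg hμη, add_zero, hw]
      · rw [if_neg h1]
        by_cases h2 : ν = η
        · subst h2
          rw [if_pos rfl, zero_add]
          exact hηadj.2
        · rw [if_neg h2, add_zero]
          rcases G.M_offdiag (fun h : μ = ν => h1 h.symm) with h | h
          · exact h
          · exfalso
            have hadj : G.adj μ ν := ⟨fun h' => h1 h'.symm, h⟩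
            have : ν ∈ G.nbrs μ := Finset.mem_filter.2 ⟨Finset.mem_univ ν, hadj⟩
            rw [hη, Finset.mem_singleton] at this
            exact h2 this
    have hsum : ∀ y : Fin G.N → ℚ,
        ∑ ν, (G.Pᵀ * G.P) μ ν * y ν = w * y μ - y η := by
      intro y
      have hterm : ∀ ν ∈ Finset.univ, (G.Pᵀ * G.P) μ ν * y ν =
          (if ν = μ then w * y ν else 0) + (if ν = η then -y ν else 0) := by
        intro ν _
        rw [hMrow ν]
        by_cases h1 : ν = μ <;> by_cases h2 : ν = η <;>
          simp [h1, h2, hμη, Ne.symm hμη] <;> ring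
      rw [Finset.sum_congr rfl hterm, Finset.sum_add_distrib,
        Finset.sum_ite_eq', Finset.sum_ite_eq',
        if_pos (Finset.mem_univ μ), if_pos (Finset.mem_univ η)]
      ring
    have hvec : ∀ y : Fin G.N → ℚ,
        (y ᵥ* (G.Pᵀ * G.P)) μ = w * y μ - y η := by
      intro y
      rw [← hsum y]
      simp only [Matrix.vecMul, dotProduct]
      exact Finset.sum_congr rfl fun ν _ => by rw [G.M_symm μ ν, mul_comm]
    have hmul : ∀ y : Fin G.N → ℚ,
        ((G.Pᵀ * G.P) *ᵥ y) μ = w * y μ - y η := by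
      intro y
      rw [← hsum y]
      simp only [Matrix.mulVec, dotProduct]
    -- canonical vector relation
    have hk1 : w * G.kvec μ - G.kvec η = 2 - w := by
      have h := congrFun G.M_mulVec_k μ
      rw [hmul G.kvec] at h
      have h2 : (G.Pᵀ *ᵥ (fun _ => (1:ℚ))) μ = ∑ ρ, G.P ρ μ := by
        simp [Matrix.mulVec, dotProduct, Matrix.transpose_apply]
      rw [h2, G.P_colsum, ← hw] at h
      exact h
    -- antinef relation
    have hf : 0 ≤ w * (f μ : ℚ) - (f η : ℚ) := by
      have h := hanti μ
      rw [hvec (fun i => (f i : ℚ))] at h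
      exact h
    -- d relations
    have hdvm : (G.dval dh ᵥ* (G.Pᵀ * G.P)) = fun i => (dh i : ℚ) := by
      unfold DualGraph.dval
      rw [Matrix.vecMul_vecMul, G.V_mul, Matrix.vecMul_one]
    have hdrel : w * G.dval dh μ - G.dval dh η = (dh μ : ℚ) := by
      have h := congrFun hdvm μ
      rw [hvec (G.dval dh)] at h
      exact h
    have hdpos : ∀ ν, (1:ℚ) ≤ G.dval dh ν := by
      intro ν
      obtain ⟨i₀, hi₀⟩ : ∃ i, dh i ≠ 0 := by
        by_contra hcon
        push_neg at hcon
        exact hdh (funext fun i => hcon i)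
      unfold DualGraph.dval
      simp only [Matrix.vecMul, dotProduct]
      have hnn : ∀ i ∈ Finset.univ, (0:ℚ) ≤ (dh i : ℚ) * G.V i ν :=
        fun i _ => mul_nonneg (Nat.cast_nonneg _) (by linarith [G.V_one_le i ν])
      have h1 : (1:ℚ) ≤ (dh i₀ : ℚ) * G.V i₀ ν := by
        have hi1 : (1:ℚ) ≤ (dh i₀ : ℚ) := by
          exact_mod_cast Nat.one_le_iff_ne_zero.2 hi₀
        nlinarith [G.V_one_le i₀ ν]
      calc (1:ℚ) ≤ (dh i₀ : ℚ) * G.V i₀ ν := h1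
        _ ≤ ∑ i, (dh i : ℚ) * G.V i ν := Finset.single_le_sum hnn (Finset.mem_univ i₀)
    have hdμ0 : (0:ℚ) < G.dval dh μ := lt_of_lt_of_le one_pos (hdpos μ)
    have hdη0 : (0:ℚ) < G.dval dh η := lt_of_lt_of_le one_pos (hdpos η)
    -- minimality at η
    have hmin' := hmin η
    simp only [DualGraph.lamA] at hmin' hξeq
    rw [div_le_div_iff₀ hdμ0 hdη0] at hmin'
    have hkη : G.kvec η = w * G.kvec μ + w - 2 := by linarith
    have hb : (f η : ℚ) + G.kvec η + 1 ≤ w * ((f μ : ℚ) + G.kvec μ + 1) - 1 := by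
      rw [hkη]; nlinarith [hf]
    have h4 : ((f μ : ℚ) + G.kvec μ + 1) * G.dval dh η
        ≤ (w * ((f μ : ℚ) + G.kvec μ + 1) - 1) * G.dval dh μ :=
      le_trans hmin' (mul_le_mul_of_nonneg_right hb hdμ0.le)
    have h5 : G.dval dh η = w * G.dval dh μ - (dh μ : ℚ) := by linarith
    rw [h5] at h4
    have hkey : G.dval dh μ ≤ ((f μ : ℚ) + G.kvec μ + 1) * (dh μ : ℚ) := by
      nlinarith [h4]
    rw [hξeq, ← mul_div_assoc, le_div_iff₀ hdμ0]
    nlinarith [hkey]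
  refine ⟨main, fun h0 => Set.eq_empty_iff_forall_notMem.2 fun ξ hξ => ?_⟩
  have h := main ξ hξ
  rw [h0] at h
  norm_num at h
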